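/- arXiv:2605.17103 — 2 statements merged into one kernel-verified Lean document; each statement's English description precedes it below -/
import Mathlib

section
/- Let A be a real N × r_U matrix and B a real N × r_V matrix whose columns are orthonormal, i.e., Aᵀ A = I and Bᵀ B = I, with r_U ≥ 1 and r_V ≥ 1. Then the ℓ²-operator norm of Aᵀ B equals 1 if and only if the column spaces of A and B have nontrivial intersection, i.e., Im A ∩ Im B ≠ {0}. -/
open Matrix

namespace PAux

open scoped RealInnerProductSpace

variable {m n p : Type*} [Fintype m] [Fintype n] [Fintype p]
  [DecidableEq m] [DecidableEq n] [DecidableEq p]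

lemma toEuclideanLin_mul_apply (M : Matrix m n ℝ) (P : Matrix n p ℝ)
    (v : EuclideanSpace ℝ p) :
    Matrix.toEuclideanLin (M * P) v = Matrix.toEuclideanLin M (Matrix.toEuclideanLin P v) := by
  simp [Matrix.toEuclideanLin_apply, Matrix.mulVec_mulVec]

lemma toEuclideanLin_one_apply (v : EuclideanSpace ℝ n) :
    Matrix.toEuclideanLin (1 : Matrix n n ℝ) v = v := by
  simp [Matrix.toEuclideanLin_apply]

variable {E F : Type*} [NormedAddCommGroup E] [InnerProductSpace ℝ E]
  [NormedAddCommGroup F] [InnerProductSpace ℝ F]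
  [FiniteDimensional ℝ E] [FiniteDimensional ℝ F]

lemma norm_map_of_left_inv (L : E →ₗ[ℝ] F)
    (hL : ∀ x, LinearMap.adjoint L (L x) = x) (x : E) : ‖L x‖ = ‖x‖ := by
  have h : ⟪L x, L x⟫ = ⟪x, x⟫ := by
    rw [← LinearMap.adjoint_inner_left, hL]
  rw [real_inner_self_eq_norm_sq, real_inner_self_eq_norm_sq] at h
  nlinarith [norm_nonneg (L x), norm_nonneg x]

lemma adjoint_key (L : E →ₗ[ℝ] F) (hL : ∀ x, LinearMap.adjoint L (L x) = x)
    (y : F) : ‖LinearMap.adjoint L y‖ ≤ ‖y‖ ∧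
      (‖LinearMap.adjoint L y‖ = ‖y‖ → y ∈ LinearMap.range L) := by
  obtain ⟨u, hu, w, hw, rfl⟩ :=
    Submodule.exists_add_mem_mem_orthogonal (K := LinearMap.range L) y
  obtain ⟨s, rfl⟩ := hu
  have hw0 : LinearMap.adjoint L w = 0 := by
    have h0 : ⟪LinearMap.adjoint L w, LinearMap.adjoint L w⟫ = 0 := by
      rw [LinearMap.adjoint_inner_left]
      exact (Submodule.mem_orthogonal' _ _).mp hw _ ⟨_, rfl⟩
    exact inner_self_eq_zero.mp h0
  have hadj : LinearMap.adjoint L (L s + w) = s := by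
    rw [map_add, hL, hw0, add_zero]
  have hinner' : ⟪L s, w⟫ = 0 := by
    have := (Submodule.mem_orthogonal' _ _).mp hw (L s) ⟨s, rfl⟩
    rw [real_inner_comm] at this; exact this
  have hsq : ‖L s + w‖ ^ 2 = ‖s‖ ^ 2 + ‖w‖ ^ 2 := by
    rw [norm_add_sq_real, hinner', norm_map_of_left_inv L hL]; ring
  rw [hadj]
  constructor
  · nlinarith [norm_nonneg s, norm_nonneg (L s + w), norm_nonneg w]
  · intro he
    have hw0' : ‖w‖ = 0 := by
      nlinarith [norm_nonneg (L s + w), norm_nonneg w]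
    have : w = 0 := norm_eq_zero.mp hw0'
    rw [this, add_zero]
    exact ⟨s, rfl⟩

lemma exists_norm_eq_opNorm {E F : Type*} [NormedAddCommGroup E] [NormedSpace ℝ E]
    [NormedAddCommGroup F] [NormedSpace ℝ F] [FiniteDimensional ℝ E] [Nontrivial E]
    (T : E →L[ℝ] F) : ∃ x : E, ‖x‖ = 1 ∧ ‖T x‖ = ‖T‖ := by
  have hcs : IsCompact (Metric.sphere (0 : E) 1) := isCompact_sphere 0 1
  have hne : (Metric.sphere (0 : E) 1).Nonempty :=
    NormedSpace.sphere_nonempty.mpr zero_le_one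
  obtain ⟨x₀, hx₀, hmax⟩ := hcs.exists_isMaxOn hne
    ((continuous_norm.comp T.continuous).continuousOn)
  have hx₀n : ‖x₀‖ = 1 := mem_sphere_zero_iff_norm.mp hx₀
  refine ⟨x₀, hx₀n, le_antisymm ?_ ?_⟩
  · simpa [hx₀n] using T.le_opNorm x₀
  · refine T.opNorm_le_bound (norm_nonneg _) fun x => ?_
    rcases eq_or_ne x 0 with rfl | hx
    · simp
    · have hxn : (0:ℝ) < ‖x‖ := norm_pos_iff.mpr hx
      have hu : ‖x‖⁻¹ • x ∈ Metric.sphere (0 : E) 1 := by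
        simp [norm_smul, abs_of_nonneg (le_of_lt hxn), inv_mul_cancel₀ hxn.ne']
      have hb : ‖T (‖x‖⁻¹ • x)‖ ≤ ‖T x₀‖ := hmax hu
      rw [T.map_smul, norm_smul, norm_inv, norm_norm] at hb
      calc ‖T x‖ = ‖x‖ * (‖x‖⁻¹ * ‖T x‖) := by field_simp
        _ ≤ ‖x‖ * ‖T x₀‖ := mul_le_mul_of_nonneg_left hb (le_of_lt hxn)
        _ = ‖T x₀‖ * ‖x‖ := mul_comm _ _

end PAux

open PAux

set_option maxHeartbeats 1000000 in
/-- **Minimal principal angle zero ↔ nontrivial intersection of column spaces.**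
For matrices `A`, `B` with orthonormal columns and at least one column each, the
ℓ²-operator norm of `Aᵀ B` equals `1` iff `Im A ∩ Im B ≠ {0}`. -/
theorem opNorm_transpose_mul_eq_one_iff
    (N rU rV : ℕ) (hrU : 1 ≤ rU) (hrV : 1 ≤ rV)
    (A : Matrix (Fin N) (Fin rU) ℝ) (B : Matrix (Fin N) (Fin rV) ℝ)
    (hA : Aᵀ * A = 1) (hB : Bᵀ * B = 1) :
    ‖LinearMap.toContinuousLinearMap (Matrix.toEuclideanLin (Aᵀ * B))‖ = 1 ↔
      LinearMap.range (Matrix.toEuclideanLin A) ⊓ LinearMap.range (Matrix.toEuclideanLin B)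
        ≠ ⊥ := by
  haveI : Nonempty (Fin rV) := ⟨⟨0, hrV⟩⟩
  haveI : Nontrivial (EuclideanSpace ℝ (Fin rV)) := inferInstance
  set LA := Matrix.toEuclideanLin A with hLA
  set LB := Matrix.toEuclideanLin B with hLB
  set T := LinearMap.toContinuousLinearMap (Matrix.toEuclideanLin (Aᵀ * B)) with hT
  -- transpose = adjoint
  have hadjA : Matrix.toEuclideanLin Aᵀ = LinearMap.adjoint LA := by
    rw [← Matrix.conjTranspose_eq_transpose_of_trivial A, hLA,
      Matrix.toEuclideanLin_conjTranspose_eq_adjoint]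
  -- left inverse property for A and B
  have hAA : ∀ x, LinearMap.adjoint LA (LA x) = x := by
    intro x
    rw [← hadjA, hLA, ← toEuclideanLin_mul_apply, hA, toEuclideanLin_one_apply]
  have hBB : ∀ x, LinearMap.adjoint LB (LB x) = x := by
    intro x
    have hadjB : Matrix.toEuclideanLin Bᵀ = LinearMap.adjoint LB := by
      rw [← Matrix.conjTranspose_eq_transpose_of_trivial B, hLB,
        Matrix.toEuclideanLin_conjTranspose_eq_adjoint]
    rw [← hadjB, hLB, ← toEuclideanLin_mul_apply, hB, toEuclideanLin_one_apply]
  have hTapp : ∀ v, T v = LinearMap.adjoint LA (LB v) := by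
    intro v
    rw [hT]
    show Matrix.toEuclideanLin (Aᵀ * B) v = _
    rw [toEuclideanLin_mul_apply, hadjA, hLB]
  -- norm at most one
  have hTle : ‖T‖ ≤ 1 := by
    refine T.opNorm_le_bound zero_le_one fun v => ?_
    rw [hTapp, one_mul]
    calc ‖LinearMap.adjoint LA (LB v)‖ ≤ ‖LB v‖ := (adjoint_key LA hAA (LB v)).1
      _ = ‖v‖ := norm_map_of_left_inv LB hBB v
  constructor
  · intro h1
    obtain ⟨x₀, hx₀n, hx₀T⟩ := exists_norm_eq_opNorm T
    rw [h1] at hx₀T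
    have hBx : ‖LB x₀‖ = 1 := by rw [norm_map_of_left_inv LB hBB, hx₀n]
    have hmem : LB x₀ ∈ LinearMap.range LA := by
      refine (adjoint_key LA hAA (LB x₀)).2 ?_
      rw [hBx, ← hTapp, hx₀T]
    rw [Submodule.ne_bot_iff]
    refine ⟨LB x₀, ⟨hmem, ⟨x₀, rfl⟩⟩, ?_⟩
    intro h0
    rw [h0, norm_zero] at hBx
    exact one_ne_zero hBx.symm
  · intro hne
    obtain ⟨y, ⟨hyA, hyB⟩, hy0⟩ := Submodule.ne_bot_iff _ |>.mp hne
    obtain ⟨s, rfl⟩ := hyA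
    obtain ⟨x, hx⟩ := hyB
    have hxn : ‖x‖ = ‖LA s‖ := by rw [← hx, norm_map_of_left_inv LB hBB]
    have hLAs : ‖LA s‖ = ‖s‖ := norm_map_of_left_inv LA hAA s
    have hxpos : (0:ℝ) < ‖x‖ := by
      rw [hxn]
      exact norm_pos_iff.mpr hy0
    have hTx : T x = s := by
      rw [hTapp, hx, hAA]
    have hge : 1 ≤ ‖T‖ := by
      have := T.le_opNorm x
      rw [hTx] at this
      have hs : ‖s‖ = ‖x‖ := by rw [← hLAs, ← hxn]
      rw [hs] at this
      nlinarith [this, hxpos]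
    exact le_antisymm hTle hge
end

section
/- Let E be a finite-dimensional real inner product space, λ > 0, and 0 < m̲ ≤ m̄. Let M : ℝ → L(E, E) be a differentiable family of self-adjoint linear maps with m̲ ‖x‖² ≤ ⟨M(t) x, x⟩ ≤ m̄ ‖x‖² for all t and x, let A : ℝ → L(E, E), and let e : ℝ → E be differentiable with e'(t) = A(t)(e(t)) for all t. Suppose that for all t ≥ 0 and all x ∈ E: ⟨M'(t) x, x⟩ + 2⟨M(t)(A(t) x), x⟩ ≤ −2λ ⟨M(t) x, x⟩. Then for all t ≥ 0, ‖e(t)‖ ≤ √(m̄/m̲) · e^{−λ t} · ‖e(0)‖. -/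
open RealInnerProductSpace

/-- **Contraction implies exponential convergence (Assumption 2 abstraction).**
Let `M : ℝ → L(E,E)` be a differentiable family of self-adjoint maps with
`m̲ ‖x‖² ≤ ⟪M t x, x⟫ ≤ m̄ ‖x‖²`, let `e' = A t (e t)`, and suppose the contraction
inequality `⟪M' t x, x⟫ + 2⟪M t (A t x), x⟫ ≤ −2λ ⟪M t x, x⟫` holds for all `t ≥ 0`.
Then `‖e t‖ ≤ √(m̄/m̲) · e^{−λ t} · ‖e 0‖` for all `t ≥ 0`. -/
theorem contraction_exponential_convergence
    (E : Type*) [NormedAddCommGroup E] [InnerProductSpace ℝ E] [FiniteDimensional ℝ E]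
    (lam ml mu : ℝ) (hlam : 0 < lam) (hml : 0 < ml) (hmlmu : ml ≤ mu)
    (M M' : ℝ → E →L[ℝ] E)
    (hMderiv : ∀ t : ℝ, HasDerivAt M (M' t) t)
    (hMsym : ∀ (t : ℝ) (x y : E), ⟪M t x, y⟫ = ⟪x, M t y⟫)
    (hMlower : ∀ (t : ℝ) (x : E), ml * ‖x‖ ^ 2 ≤ ⟪M t x, x⟫)
    (hMupper : ∀ (t : ℝ) (x : E), ⟪M t x, x⟫ ≤ mu * ‖x‖ ^ 2)
    (A : ℝ → E →L[ℝ] E) (e : ℝ → E)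
    (hederiv : ∀ t : ℝ, HasDerivAt e (A t (e t)) t)
    (hcontr : ∀ t ≥ (0 : ℝ), ∀ x : E,
      ⟪M' t x, x⟫ + 2 * ⟪M t (A t x), x⟫ ≤ -2 * lam * ⟪M t x, x⟫) :
    ∀ t ≥ (0 : ℝ),
      ‖e t‖ ≤ Real.sqrt (mu / ml) * Real.exp (-lam * t) * ‖e 0‖ := by
  set V : ℝ → ℝ := fun t => ⟪M t (e t), e t⟫ with hVdef
  set V' : ℝ → ℝ := fun t =>
    ⟪M t (e t), A t (e t)⟫ + ⟪M' t (e t) + M t (A t (e t)), e t⟫ with hV'def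
  have hV : ∀ t, HasDerivAt V (V' t) t := by
    intro t
    exact ((hMderiv t).clm_apply (hederiv t)).inner ℝ (hederiv t)
  have hVbound : ∀ t ≥ (0:ℝ), V' t ≤ -2 * lam * V t := by
    intro t ht
    have h1 : ⟪M t (e t), A t (e t)⟫ = ⟪M t (A t (e t)), e t⟫ := by
      rw [hMsym t (e t) (A t (e t)), real_inner_comm]
    have h2 : V' t = ⟪M' t (e t), e t⟫ + 2 * ⟪M t (A t (e t)), e t⟫ := by
      simp only [hV'def, inner_add_left, h1]; ring
    rw [h2]
    exact hcontr t ht (e t)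
  set g : ℝ → ℝ := fun t => V t * Real.exp (2 * lam * t) with hgdef
  have hg : ∀ t, HasDerivAt g
      (V' t * Real.exp (2 * lam * t) + V t * (Real.exp (2 * lam * t) * (2 * lam))) t := by
    intro t
    have := (hV t).mul (((hasDerivAt_id t).const_mul (2 * lam)).exp)
    simp only [id_eq, mul_one] at this
    exact this
  have hanti : AntitoneOn g (Set.Ici (0:ℝ)) := by
    apply antitoneOn_of_deriv_nonpos (convex_Ici 0)
    · exact fun t _ => (hg t).differentiableAt.continuousAt.continuousWithinAt
    · intro t ht
      exact ((hg t).differentiableAt).differentiableWithinAt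
    · intro t ht
      rw [interior_Ici] at ht
      rw [(hg t).deriv]
      have h1 : V' t ≤ -2 * lam * V t := hVbound t (le_of_lt ht)
      have h2 : (0:ℝ) < Real.exp (2 * lam * t) := Real.exp_pos _
      nlinarith [h2]
  intro t ht
  have hgle : g t ≤ g 0 := hanti (Set.self_mem_Ici) ht ht
  have hVt : V t * Real.exp (2 * lam * t) ≤ V 0 := by
    simpa [hgdef] using hgle
  have hexp : (0:ℝ) < Real.exp (2 * lam * t) := Real.exp_pos _
  have hlow : ml * ‖e t‖ ^ 2 ≤ V t := hMlower t (e t)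
  have hup : V 0 ≤ mu * ‖e 0‖ ^ 2 := hMupper 0 (e 0)
  -- squared inequality
  have hsq : ‖e t‖ ^ 2 ≤ (mu / ml) * Real.exp (-2 * lam * t) * ‖e 0‖ ^ 2 := by
    have h1 : ml * ‖e t‖ ^ 2 * Real.exp (2 * lam * t) ≤ mu * ‖e 0‖ ^ 2 := by
      calc ml * ‖e t‖ ^ 2 * Real.exp (2 * lam * t)
          ≤ V t * Real.exp (2 * lam * t) := by nlinarith
        _ ≤ V 0 := hVt
        _ ≤ mu * ‖e 0‖ ^ 2 := hup
    have h2 : Real.exp (-2 * lam * t) = (Real.exp (2 * lam * t))⁻¹ := by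
      rw [← Real.exp_neg]; ring_nf
    rw [h2]
    rw [div_mul_eq_mul_div, div_mul_eq_mul_div, le_div_iff₀ hml]
    calc ‖e t‖ ^ 2 * ml
        = ml * ‖e t‖ ^ 2 := by ring
      _ ≤ mu * ‖e 0‖ ^ 2 * (Real.exp (2 * lam * t))⁻¹ := by
          rw [← div_eq_mul_inv, le_div_iff₀ hexp]
          linarith [h1]
      _ = mu * (Real.exp (2 * lam * t))⁻¹ * ‖e 0‖ ^ 2 := by ring
  -- take square roots
  have hR : (0:ℝ) ≤ Real.sqrt (mu / ml) * Real.exp (-lam * t) * ‖e 0‖ :=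
    mul_nonneg (mul_nonneg (Real.sqrt_nonneg _) (Real.exp_pos _).le) (norm_nonneg _)
  have key : ‖e t‖ ^ 2 ≤ (Real.sqrt (mu / ml) * Real.exp (-lam * t) * ‖e 0‖) ^ 2 := by
    have hmuml : (0:ℝ) ≤ mu / ml := div_nonneg (le_trans hml.le hmlmu) hml.le
    have : (Real.sqrt (mu / ml) * Real.exp (-lam * t) * ‖e 0‖) ^ 2
        = (mu / ml) * Real.exp (-2 * lam * t) * ‖e 0‖ ^ 2 := by
      rw [mul_pow, mul_pow, Real.sq_sqrt hmuml, ← Real.exp_nat_mul]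
      ring_nf
    rw [this]
    exact hsq
  calc ‖e t‖ = Real.sqrt (‖e t‖ ^ 2) := by rw [Real.sqrt_sq (norm_nonneg _)]
    _ ≤ Real.sqrt ((Real.sqrt (mu / ml) * Real.exp (-lam * t) * ‖e 0‖) ^ 2) :=
        Real.sqrt_le_sqrt key
    _ = Real.sqrt (mu / ml) * Real.exp (-lam * t) * ‖e 0‖ := Real.sqrt_sq hR
end
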